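/- Let L_2 be the 7-dimensional complex Lie algebra with basis x_1, …, x_7 and non-trivial brackets [x_1,x_2]=x_3, [x_1,x_3]=x_4, [x_1,x_7]=−x_1, [x_2,x_6]=−x_2, [x_3,x_6]=−x_3, [x_3,x_7]=−x_3, [x_4,x_6]=−x_4, [x_4,x_7]=−2x_4, [x_6,x_7]=x_5. For x ∈ ℂ^7 let A_x be the 7×7 skew-symmetric matrix with (i,j) entry Σ_k c_{ij}^k x_k, where c_{ij}^k are the structure constants of L_2, and let R = max_{y ∈ ℂ^7} rank A_y. Then for every (x, a) ∈ ℂ^7 × ℂ^7 there exists (α, β) ∈ ℂ² with (α, β) ≠ (0, 0) such that rank(αA_x + βA_a) < R. (Together with R < 7, forced since 7 is odd, this shows the generic pencil contains both Jordan and Kronecker blocks, i.e. L_2 is of mixed type.) -/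

import Mathlib

open Matrix

noncomputable section

/-- The skew-symmetric matrix `A_x` (with `(i,j)` entry `Σ_k c_ij^k x_k`) of the
7-dimensional complex Lie algebra `L2` with non-trivial brackets
`[x₁,x₂]=x₃, [x₁,x₃]=x₄, [x₁,x₇]=-x₁, [x₂,x₆]=-x₂, [x₃,x₆]=-x₃, [x₃,x₇]=-x₃, [x₄,x₆]=-x₄, [x₄,x₇]=-2x₄, [x₆,x₇]=x₅`. -/
def L2mat (x : Fin 7 → ℂ) : Matrix (Fin 7) (Fin 7) ℂ :=
  !![0, x 2, x 3, 0, 0, 0, -x 0;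
     -x 2, 0, 0, 0, 0, -x 1, 0;
     -x 3, 0, 0, 0, 0, -x 2, -x 2;
     0, 0, 0, 0, 0, -x 3, -2 * x 3;
     0, 0, 0, 0, 0, 0, 0;
     0, x 1, x 2, x 3, 0, 0, x 4;
     x 0, 0, x 2, 2 * x 3, 0, -x 4, 0]

@[simp] lemma L2aux_cons_val_five {α : Type*} {m : ℕ} (x : α) (u : Fin (m+5) → α) :
    Matrix.vecCons x u 5 = vecHead (vecTail (vecTail (vecTail (vecTail u)))) := rfl

@[simp] lemma L2aux_cons_val_six {α : Type*} {m : ℕ} (x : α) (u : Fin (m+6) → α) :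
    Matrix.vecCons x u 6 = vecHead (vecTail (vecTail (vecTail (vecTail (vecTail u))))) := rfl

@[simp] lemma L2aux_cons_val_two {α : Type*} {m : ℕ} (x : α) (u : Fin (m+2) → α) :
    Matrix.vecCons x u 2 = vecHead (vecTail u) := rfl

@[simp] lemma L2aux_cons_val_three {α : Type*} {m : ℕ} (x : α) (u : Fin (m+3) → α) :
    Matrix.vecCons x u 3 = vecHead (vecTail (vecTail u)) := rfl

@[simp] lemma L2aux_cons_val_four {α : Type*} {m : ℕ} (x : α) (u : Fin (m+4) → α) :
    Matrix.vecCons x u 4 = vecHead (vecTail (vecTail (vecTail u))) := rfl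

/-- The principal 6×6 submatrix of `L2mat` on rows/columns `{0,1,2,3,5,6}`. -/
def L2Mm (x : Fin 7 → ℂ) : Matrix (Fin 6) (Fin 6) ℂ :=
  !![0, x 2, x 3, 0, 0, -x 0;
     -x 2, 0, 0, 0, -x 1, 0;
     -x 3, 0, 0, 0, -x 2, -x 2;
     0, 0, 0, 0, -x 3, -2 * x 3;
     0, x 1, x 2, x 3, 0, x 4;
     x 0, 0, x 2, 2 * x 3, -x 4, 0]

def L2Ff : Matrix (Fin 7) (Fin 6) ℂ :=
  !![1,0,0,0,0,0;
     0,1,0,0,0,0;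
     0,0,1,0,0,0;
     0,0,0,1,0,0;
     0,0,0,0,0,0;
     0,0,0,0,1,0;
     0,0,0,0,0,1]

def L2Fg : Matrix (Fin 6) (Fin 7) ℂ :=
  !![1,0,0,0,0,0,0;
     0,1,0,0,0,0,0;
     0,0,1,0,0,0,0;
     0,0,0,1,0,0,0;
     0,0,0,0,0,1,0;
     0,0,0,0,0,0,1]

set_option maxHeartbeats 4000000 in
lemma L2factor (y : Fin 7 → ℂ) : L2mat y = L2Ff * L2Mm y * L2Fg := by
  ext i j
  fin_cases i <;> fin_cases j <;>
    simp [L2mat, L2Mm, L2Ff, L2Fg, Matrix.mul_apply, Fin.sum_univ_succ,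
      Matrix.vecHead, Matrix.vecTail, Function.comp]

set_option maxHeartbeats 1000000 in
lemma L2GF : L2Fg * L2Ff = (1 : Matrix (Fin 6) (Fin 6) ℂ) := by
  ext i j
  fin_cases i <;> fin_cases j <;>
    simp [L2Ff, L2Fg, Matrix.mul_apply, Fin.sum_univ_succ, Matrix.one_apply]

lemma L2factor2 (y : Fin 7 → ℂ) : L2Mm y = L2Fg * L2mat y * L2Ff := by
  rw [L2factor y]
  have h : L2Fg * (L2Ff * L2Mm y * L2Fg) * L2Ff
      = (L2Fg * L2Ff) * L2Mm y * (L2Fg * L2Ff) := by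
    simp only [Matrix.mul_assoc]
  rw [h, L2GF, Matrix.one_mul, Matrix.mul_one]

set_option maxHeartbeats 4000000 in
lemma L2lin (α β : ℂ) (x a : Fin 7 → ℂ) :
    α • L2mat x + β • L2mat a = L2mat (α • x + β • a) := by
  ext i j
  fin_cases i <;> fin_cases j <;>
    simp [L2mat, Matrix.vecHead, Matrix.vecTail, Function.comp] <;> ring

set_option maxHeartbeats 4000000 in
lemma L2Mmlin (t : ℂ) (x a : Fin 7 → ℂ) :
    L2Mm (x + t • a) = L2Mm x + t • L2Mm a := by
  ext i j
  fin_cases i <;> fin_cases j <;>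
    simp [L2Mm, Matrix.vecHead, Matrix.vecTail, Function.comp] <;> ring


lemma L2rank_le_Mm (y : Fin 7 → ℂ) : (L2mat y).rank ≤ (L2Mm y).rank := by
  rw [L2factor y]
  exact le_trans (Matrix.rank_mul_le_left _ _) (Matrix.rank_mul_le_right _ _)

lemma L2Mm_rank_le (y : Fin 7 → ℂ) : (L2Mm y).rank ≤ (L2mat y).rank := by
  rw [L2factor2 y]
  exact le_trans (Matrix.rank_mul_le_left _ _) (Matrix.rank_mul_le_right _ _)

lemma L2rank_le_six (y : Fin 7 → ℂ) : (L2mat y).rank ≤ 6 :=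
  le_trans (L2rank_le_Mm y) (Matrix.rank_le_width (L2Mm y))

lemma L2rank_lt_of_det_eq_zero {n : Type*} [Fintype n] [DecidableEq n]
    (A : Matrix n n ℂ) (h : A.det = 0) : A.rank < Fintype.card n := by
  by_contra hc
  push_neg at hc
  have heq : A.rank = Fintype.card n := le_antisymm (Matrix.rank_le_card_width A) hc
  have htop : LinearMap.range A.mulVecLin = ⊤ := by
    apply Submodule.eq_top_of_finrank_eq
    rw [← Matrix.rank, heq]
    simp
  have hsurj : Function.Surjective A.mulVec := by
    intro v
    obtain ⟨w, hw⟩ := htop ▸ Submodule.mem_top (x := v) (R := ℂ)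
    exact ⟨w, hw⟩
  have := Matrix.mulVec_surjective_iff_isUnit.mp hsurj
  rw [Matrix.isUnit_iff_isUnit_det, isUnit_iff_ne_zero] at this
  exact this h

def L2Kinv : Matrix (Fin 6) (Fin 6) ℂ :=
  !![0, 0, -1, 0, 0, 0;
     0, 0, -1/2, 0, 1, -1/2;
     1, 1/2, 0, -1/2, 0, 0;
     0, 0, 1/2, 0, 0, 1/2;
     0, -1, 0, 0, 0, 0;
     0, 1/2, 0, -1/2, 0, 0]

set_option maxHeartbeats 4000000 in
lemma L2y0_mul_Kinv : L2Mm ![1,1,0,1,0,0,0] * L2Kinv = 1 := by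
  ext i j
  fin_cases i <;> fin_cases j <;>
    norm_num [L2Mm, L2Kinv, Matrix.mul_apply, Fin.sum_univ_succ, Matrix.one_apply, Fin.ext_iff,
      Matrix.vecHead, Matrix.vecTail, Function.comp]

set_option maxHeartbeats 4000000 in
lemma L2Kinv_mul_y0 : L2Kinv * L2Mm ![1,1,0,1,0,0,0] = 1 := by
  ext i j
  fin_cases i <;> fin_cases j <;>
    norm_num [L2Mm, L2Kinv, Matrix.mul_apply, Fin.sum_univ_succ, Matrix.one_apply, Fin.ext_iff,
      Matrix.vecHead, Matrix.vecTail, Function.comp]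

lemma L2y0_isUnit : IsUnit (L2Mm ![1,1,0,1,0,0,0]) :=
  ⟨⟨L2Mm ![1,1,0,1,0,0,0], L2Kinv, L2y0_mul_Kinv, L2Kinv_mul_y0⟩, rfl⟩

lemma L2eval_charmatrix {n : Type*} [Fintype n] [DecidableEq n]
    (D : Matrix n n ℂ) (t : ℂ) :
    (charmatrix D).map (Polynomial.eval t) = t • (1 : Matrix n n ℂ) - D := by
  ext i j
  by_cases h : i = j
  · subst h; simp [charmatrix_apply_eq, Matrix.one_apply]
  · simp [charmatrix_apply_ne _ _ _ h, Matrix.one_apply, h]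

lemma L2charpoly_eval {n : Type*} [Fintype n] [DecidableEq n]
    (D : Matrix n n ℂ) (t : ℂ) :
    (Matrix.charpoly D).eval t = (t • (1 : Matrix n n ℂ) - D).det := by
  have h := RingHom.map_det (Polynomial.evalRingHom t) (charmatrix D)
  rw [Matrix.charpoly]
  calc Polynomial.eval t (charmatrix D).det
      = (Polynomial.evalRingHom t) (charmatrix D).det := rfl
    _ = ((charmatrix D).map (Polynomial.evalRingHom t)).det := h
    _ = (t • (1 : Matrix n n ℂ) - D).det := by
        rw [show (charmatrix D).map (Polynomial.evalRingHom t)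
            = (charmatrix D).map (Polynomial.eval t) from rfl,
          L2eval_charmatrix]

set_option maxRecDepth 8000 in
set_option maxHeartbeats 1000000 in
lemma L2exists_pencil_root (A B : Matrix (Fin 6) (Fin 6) ℂ) (h : IsUnit A.det) :
    ∃ t : ℂ, (B + t • A).det = 0 := by
  have hmonic := Matrix.charpoly_monic (-(A⁻¹ * B))
  have hdeg : (Matrix.charpoly (-(A⁻¹ * B))).natDegree = 6 := by
    simpa using Matrix.charpoly_natDegree_eq_dim (-(A⁻¹ * B))
  obtain ⟨t₀, ht₀⟩ := Complex.exists_root (f := Matrix.charpoly (-(A⁻¹ * B))) (by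
    rw [Polynomial.degree_eq_natDegree hmonic.ne_zero, hdeg]
    norm_num)
  refine ⟨t₀, ?_⟩
  have hdet0 : (t₀ • (1 : Matrix (Fin 6) (Fin 6) ℂ) + A⁻¹ * B).det = 0 := by
    have hcp := L2charpoly_eval (-(A⁻¹ * B)) t₀
    rw [Polynomial.IsRoot.def] at ht₀
    rw [ht₀, sub_neg_eq_add] at hcp
    exact hcp.symm
  have hfac : B + t₀ • A = A * (t₀ • (1 : Matrix (Fin 6) (Fin 6) ℂ) + A⁻¹ * B) := by
    rw [Matrix.mul_add, ← Matrix.mul_assoc, Matrix.mul_nonsing_inv _ h, Matrix.one_mul,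
      Matrix.mul_smul, Matrix.mul_one, add_comm]
  rw [hfac, Matrix.det_mul, hdet0, mul_zero]

/-- With `R = max_y rank A_y`, for every pair `(x, a)` there exists `(α, β) ≠ (0, 0)`
with `rank (α A_x + β A_a) < R`: the generic pencil has Jordan blocks, and together
with `R < 7` this shows `L2` is of mixed type. -/
theorem L2_mixed_type (R : ℕ)
    (hR : IsGreatest {r : ℕ | ∃ y : Fin 7 → ℂ, (L2mat y).rank = r} R) :
    ∀ x a : Fin 7 → ℂ, ∃ α β : ℂ, (α, β) ≠ (0, 0) ∧
      (α • L2mat x + β • L2mat a).rank < R := by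
  intro x a
  -- R = 6
  have hMm6 : (L2Mm ![1,1,0,1,0,0,0]).rank = 6 := by
    simpa using Matrix.rank_of_isUnit _ L2y0_isUnit
  have hR6 : 6 ≤ R := by
    apply hR.2
    refine ⟨![1,1,0,1,0,0,0], le_antisymm (L2rank_le_six _) ?_⟩
    calc (6 : ℕ) = (L2Mm ![1,1,0,1,0,0,0]).rank := hMm6.symm
      _ ≤ _ := L2Mm_rank_le ![1,1,0,1,0,0,0]
  -- if the key 6×6 minor vanishes, the rank drops below 6 ≤ R
  have key : ∀ y : Fin 7 → ℂ, (L2Mm y).det = 0 → (L2mat y).rank < R := by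
    intro y hy
    have := L2rank_lt_of_det_eq_zero (L2Mm y) hy
    simp only [Fintype.card_fin] at this
    exact lt_of_le_of_lt (L2rank_le_Mm y) (lt_of_lt_of_le this hR6)
  by_cases hd : (L2Mm a).det = 0
  · refine ⟨0, 1, by simp, ?_⟩
    have h1 : (0 : ℂ) • L2mat x + (1 : ℂ) • L2mat a = L2mat a := by simp
    rw [h1]
    exact key a hd
  · have hunit : IsUnit (L2Mm a).det := isUnit_iff_ne_zero.mpr hd
    obtain ⟨t₀, ht₀⟩ := L2exists_pencil_root (L2Mm a) (L2Mm x) hunit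
    have hdet : (L2Mm (x + t₀ • a)).det = 0 := by
      rw [L2Mmlin]; exact ht₀
    refine ⟨1, t₀, by simp, ?_⟩
    have h1 : (1 : ℂ) • L2mat x + t₀ • L2mat a = L2mat (x + t₀ • a) := by
      rw [L2lin 1 t₀ x a, one_smul]
    rw [h1]
    exact key _ hdet

end
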